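/- Let X be a tame EM-simplicial set, let x ∈ X_n be supported on the finite set A ⊆ ω, and let φ : [m] → [n] be a map in the simplex category Δ. Then (u_0,…,u_m).φ^*x = (v_0,…,v_m).φ^*x for all u_0,…,u_m,v_0,…,v_m ∈ M such that u_i(a) = v_i(a) for all i = 0,…,m and all a ∈ A. -/

import Mathlib

noncomputable section

/- ## Basic setup: the monoid `M = Inj(ω,ω)`, supports, tameness, universal subgroups -/

open CategoryTheory Opposite Simplicial MonoidalCategory

set_option linter.unusedVariables false

/-- The monoid `𝕄 = Inj(ω,ω)` of injective self-maps of `ω = ℕ`, under composition. -/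
noncomputable def Mi : Type := {f : ℕ → ℕ // Function.Injective f}

noncomputable instance : Monoid Mi where
  one := ⟨id, fun _ _ h => h⟩
  mul u v := ⟨u.1 ∘ v.1, u.2.comp v.2⟩
  mul_assoc u v w := rfl
  one_mul u := rfl
  mul_one u := rfl

@[simp] lemma Mi.one_apply (n : ℕ) : (1 : Mi).1 n = n := rfl
@[simp] lemma Mi.mul_apply (u v : Mi) (n : ℕ) : (u * v).1 n = u.1 (v.1 n) := rfl

/-- An element `x` of an `𝕄`-"set" (given by a raw action `act`) is supported on `A ⊆ ω` if
every `u ∈ 𝕄` fixing `A` pointwise fixes `x`. -/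
noncomputable def MSuppOn {X : Type*} (act : Mi → X → X) (A : Set ℕ) (x : X) : Prop :=
  ∀ u : Mi, (∀ a ∈ A, u.1 a = a) → act u x = x

/-- Finitely supported elements. -/
noncomputable def MFinSupp {X : Type*} (act : Mi → X → X) (x : X) : Prop :=
  ∃ A : Set ℕ, A.Finite ∧ MSuppOn act A x

/-- The support of an element: the intersection of all finite sets on which it is supported. -/
noncomputable def MSupp {X : Type*} (act : Mi → X → X) (x : X) : Set ℕ :=
  ⋂₀ setOf (fun (A : Set ℕ) => A.Finite ∧ MSuppOn act A x)

/-- A (raw) `𝕄`-action is tame if every element is finitely supported. -/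
noncomputable def MTame {X : Type*} (act : Mi → X → X) : Prop := ∀ x : X, MFinSupp act x

/-- A submonoid `H ⊆ 𝕄` is a *universal subgroup* if it is a finite subgroup and `ω`, with the
tautological `H`-action, is a complete `H`-set universe, i.e. every finite `H`-set embeds
`H`-equivariantly into `ω`. -/
noncomputable def IsUniversal (H : Submonoid Mi) : Prop :=
  (∀ h ∈ H, ∃ h' ∈ H, h * h' = 1 ∧ h' * h = 1) ∧ Finite H ∧
    ∀ (n : ℕ) (ρ : ↥H →* Equiv.Perm (Fin n)), ∃ e : Fin n → ℕ,
      Function.Injective e ∧ ∀ (h : ↥H) (i : Fin n), e (ρ h i) = (h : Mi).1 (e i)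

/- ## `E𝕄`-simplicial sets: simplicial sets with an action of the simplicial monoid `E𝕄`,
  where `(E𝕄)_n = 𝕄^{n+1}`. -/

/-- An `E𝕄`-simplicial set: a simplicial set `X` together with, levelwise, an action of
`𝕄^{n+1} = (E𝕄)_n` on `X_n`, compatible with the simplicial structure maps. -/
structure EMSSet : Type 1 where
  X : SSet.{0}
  act : ∀ o : SimplexCategoryᵒᵖ, (Fin (o.unop.len + 1) → Mi) → X.obj o → X.obj o
  act_one : ∀ o x, act o (fun _ => 1) x = x
  act_mul : ∀ o u v x, act o (fun i => u i * v i) x = act o u (act o v x)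
  act_map : ∀ {o o' : SimplexCategoryᵒᵖ} (f : o ⟶ o') (u : Fin (o.unop.len + 1) → Mi)
      (x : X.obj o), X.map f (act o u x) = act o' (fun i => u (f.unop.toOrderHom i)) (X.map f x)

namespace EMSSet

/-- A simplex `x ∈ X_n` is `k`-supported on `A` if every `u ∈ 𝕄` fixing `A` pointwise,
inserted in the `(k+1)`-st coordinate of `𝕄^{n+1}` (identities elsewhere), fixes `x`. -/
noncomputable def KSuppOn (E : EMSSet) {o : SimplexCategoryᵒᵖ} (k : Fin (o.unop.len + 1)) (A : Set ℕ)
    (x : E.X.obj o) : Prop :=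
  ∀ w : Mi, (∀ a ∈ A, w.1 a = a) → E.act o (fun i => if i = k then w else 1) x = x

/-- `x` is `k`-finitely supported. -/
noncomputable def KFinSupp (E : EMSSet) {o : SimplexCategoryᵒᵖ} (k : Fin (o.unop.len + 1))
    (x : E.X.obj o) : Prop :=
  ∃ A : Set ℕ, A.Finite ∧ E.KSuppOn k A x

/-- The `k`-th support of a simplex: the intersection of all finite sets on which it is
`k`-supported. -/
noncomputable def ksupp (E : EMSSet) {o : SimplexCategoryᵒᵖ} (k : Fin (o.unop.len + 1))
    (x : E.X.obj o) : Set ℕ :=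
  ⋂₀ setOf (fun (A : Set ℕ) => A.Finite ∧ E.KSuppOn k A x)

/-- `x` is supported on `A` if it is `k`-supported on `A` for all `k`. -/
noncomputable def SuppOn (E : EMSSet) {o : SimplexCategoryᵒᵖ} (A : Set ℕ) (x : E.X.obj o) : Prop :=
  ∀ k, E.KSuppOn k A x

/-- The support of a (finitely supported) simplex. -/
noncomputable def supp (E : EMSSet) {o : SimplexCategoryᵒᵖ} (x : E.X.obj o) : Set ℕ :=
  ⋃ k, E.ksupp k x

/-- An `E𝕄`-simplicial set is tame if every simplex is `k`-finitely supported for all `k`. -/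
noncomputable def Tame (E : EMSSet) : Prop :=
  ∀ (o : SimplexCategoryᵒᵖ) (x : E.X.obj o) (k : Fin (o.unop.len + 1)), E.KFinSupp k x

end EMSSet

/-- Morphisms of `E𝕄`-simplicial sets: `E𝕄`-equivariant simplicial maps. -/
@[ext] structure EMHom (E F : EMSSet) : Type where
  toHom : E.X ⟶ F.X
  equiv : ∀ (o : SimplexCategoryᵒᵖ) (u : Fin (o.unop.len + 1) → Mi) (x : E.X.obj o),
    toHom.app o (E.act o u x) = F.act o u (toHom.app o x)

namespace EMHom

noncomputable def id' (E : EMSSet) : EMHom E E :=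
  ⟨𝟙 E.X, fun _ _ _ => rfl⟩

noncomputable def comp {E F G : EMSSet} (f : EMHom E F) (g : EMHom F G) : EMHom E G :=
  ⟨f.toHom ≫ g.toHom, fun o u x => by
    have h1 := f.equiv o u x
    have h2 := g.equiv o u (f.toHom.app o x)
    show g.toHom.app o (f.toHom.app o _) = _
    rw [h1, h2]
    rfl⟩

end EMHom

noncomputable instance : Category EMSSet where
  Hom := EMHom
  id := EMHom.id'
  comp := EMHom.comp
  id_comp f := by apply EMHom.ext; simp [EMHom.comp, EMHom.id']
  comp_id f := by apply EMHom.ext; simp [EMHom.comp, EMHom.id']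
  assoc f g h := by apply EMHom.ext; simp [EMHom.comp]

/- ## STATEMENT 17:
Let `X` be a tame `E𝕄`-simplicial set, `x ∈ X_n` supported on the finite set `A ⊆ ω`, and
`φ : [m] → [n]` in `Δ`. Then `(u_0,…,u_m) • φ^*x = (v_0,…,v_m) • φ^*x` whenever `u_i` and
`v_i` agree on `A` for all `i`. -/
lemma Mi.ext' {u v : Mi} (h : ∀ n, u.1 n = v.1 n) : u = v := Subtype.ext (funext h)

lemma Mi.apply_eq {u v : Mi} (h : u = v) (n : ℕ) : u.1 n = v.1 n := by rw [h]

/-- If every single-coordinate insertion of `w i` fixes `y`, then the tuple `w` fixes `y`. -/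
lemma act_of_forall_single (E : EMSSet) {o : SimplexCategoryᵒᵖ} (y : E.X.obj o)
    (w : Fin (o.unop.len + 1) → Mi)
    (h : ∀ i, E.act o (fun i' => if i' = i then w i else 1) y = y) :
    E.act o w y = y := by
  classical
  have key : ∀ s : Finset (Fin (o.unop.len + 1)),
      E.act o (fun i => if i ∈ s then w i else 1) y = y := by
    intro s
    induction s using Finset.induction_on with
    | empty => simpa using E.act_one o y
    | @insert a s ha ih =>
        have htuple : (fun i => if i ∈ insert a s then w i else 1)
            = fun i => (if i = a then w a else 1) * (if i ∈ s then w i else 1) := by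
          funext i
          by_cases hia : i = a
          · subst hia
            simp [ha]
          · by_cases his : i ∈ s <;> simp [hia, his]
        rw [htuple, E.act_mul, ih, h a]
  have := key Finset.univ
  simpa using this
/-- Any injection agrees on a finite set with an invertible element of `Mi`. -/
lemma exists_perm_extend (A : Set ℕ) (hA : A.Finite) (g : Mi) :
    ∃ p q : Mi, p * q = 1 ∧ q * p = 1 ∧ ∀ a ∈ A, p.1 a = g.1 a := by
  classical
  obtain ⟨e⟩ : Nonempty ((↥(Aᶜ)) ≃ (↥((g.1 '' A)ᶜ))) := by
    have h1 : (Aᶜ : Set ℕ).Infinite := hA.infinite_compl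
    have h2 : ((g.1 '' A)ᶜ : Set ℕ).Infinite := (hA.image g.1).infinite_compl
    haveI := h1.to_subtype
    haveI := h2.to_subtype
    exact nonempty_equiv_of_countable
  let e1 : ↥A ≃ ↥(g.1 '' A) := Equiv.Set.image g.1 A g.2
  let π : ℕ ≃ ℕ := (Equiv.Set.sumCompl A).symm.trans ((e1.sumCongr e).trans
    (Equiv.Set.sumCompl (g.1 '' A)))
  refine ⟨⟨π, π.injective⟩, ⟨π.symm, π.symm.injective⟩,
    Mi.ext' (fun n => π.apply_symm_apply n), Mi.ext' (fun n => π.symm_apply_apply n), ?_⟩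
  intro a ha
  show π a = g.1 a
  simp only [π, Equiv.trans_apply, Equiv.Set.sumCompl_symm_apply_of_mem ha,
    Equiv.sumCongr_apply, Sum.map_inl, Equiv.Set.sumCompl_apply_inl]
  rfl
/-- Pullbacks of simplices supported on `A` are `k`-supported on `A` (tameness needed). -/
lemma ksupp_pullback (E : EMSSet) (hE : E.Tame) {o o' : SimplexCategoryᵒᵖ} (f : o ⟶ o')
    (x : E.X.obj o) (A : Set ℕ) (hA : A.Finite) (hx : E.SuppOn A x)
    (i : Fin (o'.unop.len + 1)) : E.KSuppOn i A (E.X.map f x) := by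
  classical
  set φ := f.unop.toOrderHom with hφ
  set y := E.X.map f x with hy
  choose B hBfin hBsupp using fun j => hE o' y j
  set Bu : Set ℕ := ⋃ j, B j with hBudef
  have hBufin : Bu.Finite := Set.finite_iUnion hBfin
  have hBsub : ∀ j, B j ⊆ Bu := fun j => Set.subset_iUnion B j
  have h_block : ∀ r : Mi, (∀ a ∈ A, r.1 a = a) →
      E.act o' (fun i' => if φ i' = φ i then r else 1) y = y := by
    intro r hr
    have h2 := E.act_map f (fun k => if k = φ i then r else 1) x
    rw [hx (φ i) r hr] at h2
    exact h2.symm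
  intro w hw
  -- auxiliary sets
  have hwpre : (w.1 ⁻¹' Bu).Finite := hBufin.preimage (Set.injOn_of_injective w.2)
  set F : Set ℕ := A ∪ Bu ∪ (w.1 ⁻¹' Bu) with hF
  have hFfin : F.Finite := ((hA.union hBufin).union hwpre)
  set Ev : Set ℕ := Set.range (fun n : ℕ => 2 * n) with hEvdef
  set Od : Set ℕ := Set.range (fun n : ℕ => 2 * n + 1) with hOddef
  have hEvOd : ∀ n, n ∈ Ev → n ∈ Od → False := by
    rintro n ⟨a, ha⟩ ⟨b, hb⟩
    dsimp at ha hb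
    omega
  set Es : Set ℕ := Ev \ F with hEsdef
  have hEsInf : Es.Infinite :=
    (Set.infinite_range_of_injective (fun a b h => by omega)).diff hFfin
  set R : Set ℕ := Od \ F with hRdef
  have hRInf : R.Infinite :=
    (Set.infinite_range_of_injective (fun a b h => by omega)).diff hFfin
  have hEsA : ∀ n ∈ Es, n ∉ A := fun n hn ha => hn.2 (Or.inl (Or.inl ha))
  have hEsB : ∀ n ∈ Es, n ∉ Bu := fun n hn hb => hn.2 (Or.inl (Or.inr hb))
  have hEsW : ∀ n ∈ Es, w.1 n ∉ Bu := fun n hn hb => hn.2 (Or.inr hb)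
  have hRA : ∀ n ∈ R, n ∉ A := fun n hn ha => hn.2 (Or.inl (Or.inl ha))
  have hRB : ∀ n ∈ R, n ∉ Bu := fun n hn hb => hn.2 (Or.inl (Or.inr hb))
  have hREs : ∀ n ∈ R, n ∉ Es := fun n hn hn' => hEvOd n hn'.1 hn.1
  -- the injection s
  set sEmb : ℕ ↪ ↥Es := Set.Infinite.natEmbedding Es hEsInf with hsEmb
  set sfun : ℕ → ℕ := fun n => if n ∈ A then n else (sEmb n : ℕ) with hsfun
  have hsA : ∀ a ∈ A, sfun a = a := fun a ha => if_pos ha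
  have hsEs : ∀ n, n ∉ A → sfun n ∈ Es := fun n hn => by
    rw [hsfun]; simp only [if_neg hn]; exact (sEmb n).2
  have hsinj : Function.Injective sfun := by
    intro a b hab
    by_cases ha : a ∈ A <;> by_cases hb : b ∈ A
    · rwa [hsA a ha, hsA b hb] at hab
    · rw [hsA a ha] at hab
      exact absurd (hab ▸ ha) (hEsA _ (hsEs b hb))
    · rw [hsA b hb] at hab
      exact absurd (hab.symm ▸ hb) (hEsA _ (hsEs a ha))
    · rw [hsfun] at hab
      simp only [if_neg ha, if_neg hb] at hab
      exact sEmb.injective (Subtype.ext hab)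
  set s : Mi := ⟨sfun, hsinj⟩ with hs
  have hsrange : ∀ n, sfun n ∈ A ∪ Es := fun n => by
    by_cases hn : n ∈ A
    · rw [hsA n hn]; exact Or.inl hn
    · exact Or.inr (hsEs n hn)
  have hkey3 : ∀ m, w.1 (sfun m) ∈ Bu → m ∈ A ∧ sfun m = m ∧ w.1 m = m := by
    intro m hm
    by_cases hmA : m ∈ A
    · exact ⟨hmA, hsA m hmA, hw m hmA⟩
    · exact absurd hm (hEsW _ (hsEs m hmA))
  -- the injection t
  set rEmb : ℕ ↪ ↥R := Set.Infinite.natEmbedding R hRInf with hrEmb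
  set tfun : ℕ → ℕ := fun n =>
    if h : ∃ m, w.1 (sfun m) = n then sfun (Classical.choose h)
    else if n ∈ Bu then n else (rEmb n : ℕ) with htfun
  have ht_ws : ∀ n, tfun (w.1 (sfun n)) = sfun n := by
    intro n
    have hex : ∃ m, w.1 (sfun m) = w.1 (sfun n) := ⟨n, rfl⟩
    rw [htfun]
    simp only [dif_pos hex]
    exact w.2 (Classical.choose_spec hex)
  have ht_B : ∀ b, b ∈ Bu → tfun b = b := by
    intro b hb
    rw [htfun]
    by_cases hex : ∃ m, w.1 (sfun m) = b
    · simp only [dif_pos hex]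
      have hspec := Classical.choose_spec hex
      obtain ⟨hmA, hsm, hwm⟩ := hkey3 (Classical.choose hex) (by rw [hspec]; exact hb)
      rw [hsm]
      rw [hsm, hwm] at hspec
      exact hspec
    · simp only [dif_neg hex, if_pos hb]
  have htinj : Function.Injective tfun := by
    intro a b hab
    rw [htfun] at hab
    by_cases hea : ∃ m, w.1 (sfun m) = a <;> by_cases heb : ∃ m, w.1 (sfun m) = b
    · simp only [dif_pos hea, dif_pos heb] at hab
      have h1 := Classical.choose_spec hea
      have h2 := Classical.choose_spec heb
      rw [← h1, ← h2, hsinj hab]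
    · simp only [dif_pos hea, dif_neg heb] at hab
      by_cases hbB : b ∈ Bu
      · rw [if_pos hbB] at hab
        by_cases hmA : Classical.choose hea ∈ A
        · have h1 := Classical.choose_spec hea
          rw [hsA _ hmA, hw _ hmA] at h1
          rw [hsA _ hmA] at hab
          rw [← h1, hab]
        · exact absurd (hab ▸ hsEs _ hmA) (fun h => hEsB b h hbB)
      · rw [if_neg hbB] at hab
        rcases hab ▸ hsrange (Classical.choose hea) with h | h
        · exact absurd h (hRA _ (rEmb b).2)
        · exact absurd h (hREs _ (rEmb b).2)
    · simp only [dif_neg hea, dif_pos heb] at hab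
      by_cases haB : a ∈ Bu
      · rw [if_pos haB] at hab
        by_cases hmA : Classical.choose heb ∈ A
        · have h1 := Classical.choose_spec heb
          rw [hsA _ hmA, hw _ hmA] at h1
          rw [hsA _ hmA] at hab
          rw [← h1, hab]
        · exact absurd (hab ▸ hsEs _ hmA) (fun h => hEsB a h haB)
      · rw [if_neg haB] at hab
        rcases hab.symm ▸ hsrange (Classical.choose heb) with h | h
        · exact absurd h (hRA _ (rEmb a).2)
        · exact absurd h (hREs _ (rEmb a).2)
    · simp only [dif_neg hea, dif_neg heb] at hab
      by_cases haB : a ∈ Bu <;> by_cases hbB : b ∈ Bu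
      · rwa [if_pos haB, if_pos hbB] at hab
      · rw [if_pos haB, if_neg hbB] at hab
        exact absurd (hab ▸ haB) (hRB _ (rEmb b).2)
      · rw [if_neg haB, if_pos hbB] at hab
        exact absurd (hab.symm ▸ hbB) (hRB _ (rEmb a).2)
      · rw [if_neg haB, if_neg hbB] at hab
        exact rEmb.injective (Subtype.ext hab)
  set t : Mi := ⟨tfun, htinj⟩ with ht
  have hsfix : ∀ a ∈ A, s.1 a = a := hsA
  have hwsfix : ∀ a ∈ A, (w * s).1 a = a := fun a ha => by
    show w.1 (sfun a) = a
    rw [hsA a ha]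
    exact hw a ha
  -- main computation
  show E.act o' (fun i' => if i' = i then w else 1) y = y
  conv_lhs => rw [← h_block s hsfix]
  rw [← E.act_mul]
  have tuple_eq : (fun i' => (if i' = i then w else 1) * (if φ i' = φ i then s else 1))
      = fun i' => (if i' = i then (1 : Mi) else if φ i' = φ i then t else 1) *
          (if φ i' = φ i then w * s else 1) := by
    funext i'
    by_cases h1 : i' = i
    · subst h1
      rw [if_pos rfl, if_pos rfl, if_pos rfl, if_pos rfl, one_mul]
    · by_cases h2 : φ i' = φ i
      · rw [if_neg h1, if_pos h2, if_neg h1, if_pos h2, if_pos h2, one_mul]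
        refine Mi.ext' (fun n => ?_)
        show sfun n = tfun (w.1 (sfun n))
        exact (ht_ws n).symm
      · rw [if_neg h1, if_neg h2, if_neg h1, if_neg h2, if_neg h2, one_mul]
  rw [tuple_eq, E.act_mul, h_block (w * s) hwsfix]
  apply act_of_forall_single
  intro i'
  by_cases h1 : i' = i
  · have heq : (fun i'' => if i'' = i' then (if i' = i then (1 : Mi)
        else if φ i' = φ i then t else 1) else 1) = fun _ => (1 : Mi) := by
      funext i''
      by_cases h : i'' = i'
      · rw [if_pos h, if_pos h1]
      · rw [if_neg h]
    rw [heq]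
    exact E.act_one o' y
  · by_cases h2 : φ i' = φ i
    · simp only [if_neg h1, if_pos h2]
      exact hBsupp i' t (fun b hb => ht_B b (hBsub i' hb))
    · have heq : (fun i'' => if i'' = i' then (if i' = i then (1 : Mi)
          else if φ i' = φ i then t else 1) else 1) = fun _ => (1 : Mi) := by
        funext i''
        by_cases h : i'' = i'
        · rw [if_pos h, if_neg h1, if_neg h2]
        · rw [if_neg h]
      rw [heq]
      exact E.act_one o' y

theorem act_eq_of_agree_on_support (E : EMSSet) (hE : E.Tame)
    {o o' : SimplexCategoryᵒᵖ} (f : o ⟶ o') (x : E.X.obj o)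
    (A : Set ℕ) (hA : A.Finite) (hx : E.SuppOn A x)
    (u v : Fin (o'.unop.len + 1) → Mi)
    (huv : ∀ (i : Fin (o'.unop.len + 1)), ∀ a ∈ A, (u i).1 a = (v i).1 a) :
    E.act o' u (E.X.map f x) = E.act o' v (E.X.map f x) := by
    classical
  have hks : ∀ i, E.KSuppOn i A (E.X.map f x) := ksupp_pullback E hE f x A hA hx
  set y := E.X.map f x with hy
  choose p q hpq hqp hpu using fun i => exists_perm_extend A hA (u i)
  have fixu : ∀ i, ∀ a ∈ A, ((q i) * (u i)).1 a = a := fun i a ha => by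
    show (q i).1 ((u i).1 a) = a
    rw [← hpu i a ha]
    exact Mi.apply_eq (hqp i) a
  have fixv : ∀ i, ∀ a ∈ A, ((q i) * (v i)).1 a = a := fun i a ha => by
    show (q i).1 ((v i).1 a) = a
    rw [← huv i a ha, ← hpu i a ha]
    exact Mi.apply_eq (hqp i) a
  have hcu : E.act o' (fun i => q i * u i) y = y :=
    act_of_forall_single E y _ (fun i => hks i (q i * u i) (fixu i))
  have hcv : E.act o' (fun i => q i * v i) y = y :=
    act_of_forall_single E y _ (fun i => hks i (q i * v i) (fixv i))
  have hu2 : u = fun i => p i * (q i * u i) :=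
    funext fun i => by rw [← mul_assoc, hpq i, one_mul]
  have hv2 : v = fun i => p i * (q i * v i) :=
    funext fun i => by rw [← mul_assoc, hpq i, one_mul]
  have h1 : E.act o' u y = E.act o' p y := by
    conv_lhs => rw [hu2]
    rw [E.act_mul, hcu]
  have h2 : E.act o' v y = E.act o' p y := by
    conv_lhs => rw [hv2]
    rw [E.act_mul, hcv]
  rw [h1, h2]
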